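/- Let v, V be differentiable functions on (-∞, t₀] with values in ℝ and a Banach space respectively, satisfying d(|v(t)| + ‖V(t)‖)/dt ≤ α·(1 + K·e^{αt})·(|v(t)| + ‖V(t)‖) for constants α, K > 0, and suppose |v(t_n)| + ‖V(t_n)‖ = o(e^{αt_n}) along some sequence t_n → -∞. Then v ≡ 0 and V ≡ 0 on (-∞, t₀]. -/

import Mathlib

open Real Filter
open scoped Topology

/-- Gronwall-type uniqueness for entrance laws: if `v : ℝ → ℝ` and `V : ℝ → E` (E a Banach
space) are differentiable on `(-∞, t₀]`, the function `h(t) = |v(t)| + ‖V(t)‖` is differentiable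
with `h'(t) ≤ α(1 + K e^{αt}) h(t)` there, and `h(t_n) = o(e^{α t_n})` along some sequence
`t_n → -∞`, then `v ≡ 0` and `V ≡ 0` on `(-∞, t₀]`. -/
theorem gronwall_entrance_law_uniqueness
    {E : Type*} [NormedAddCommGroup E] [NormedSpace ℝ E] [CompleteSpace E]
    (α K t₀ : ℝ) (hα : 0 < α) (hK : 0 < K)
    (v : ℝ → ℝ) (V : ℝ → E)
    (hv : ∀ t : ℝ, t ≤ t₀ → DifferentiableAt ℝ v t)
    (hV : ∀ t : ℝ, t ≤ t₀ → DifferentiableAt ℝ V t)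
    (h' : ℝ → ℝ)
    (hh : ∀ t : ℝ, t ≤ t₀ → HasDerivAt (fun s => |v s| + ‖V s‖) (h' t) t)
    (hineq : ∀ t : ℝ, t ≤ t₀ →
      h' t ≤ α * (1 + K * Real.exp (α * t)) * (|v t| + ‖V t‖))
    (tn : ℕ → ℝ) (htn : Tendsto tn atTop atBot)
    (hsmall : Tendsto (fun n => (|v (tn n)| + ‖V (tn n)‖) / Real.exp (α * tn n)) atTop (𝓝 0)) :
    ∀ t : ℝ, t ≤ t₀ → v t = 0 ∧ V t = 0 := by
  -- Notation: h s = |v s| + ‖V s‖, Φ s = α s + K e^{α s}, g s = h s * exp(-Φ s).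
  set h : ℝ → ℝ := fun s => |v s| + ‖V s‖ with hh_def
  set Φ : ℝ → ℝ := fun s => α * s + K * Real.exp (α * s) with hΦ_def
  set g : ℝ → ℝ := fun s => h s * Real.exp (-(Φ s)) with hg_def
  have hΦ' : ∀ s : ℝ, HasDerivAt Φ (α * (1 + K * Real.exp (α * s))) s := by
    intro s
    have h1 : HasDerivAt (fun u : ℝ => α * u) (α * 1) s := (hasDerivAt_id s).const_mul α
    have h2 : HasDerivAt (fun u : ℝ => Real.exp (α * u)) (Real.exp (α * s) * (α * 1)) s :=
      (Real.hasDerivAt_exp (α * s)).comp s ((hasDerivAt_id s).const_mul α)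
    have := h1.add (h2.const_mul K)
    rw [show α * (1 + K * Real.exp (α * s)) = α * 1 + K * (Real.exp (α * s) * (α * 1)) by ring]
    exact this
  have hgderiv : ∀ s : ℝ, s ≤ t₀ →
      HasDerivAt g (h' s * Real.exp (-(Φ s)) +
        h s * (Real.exp (-(Φ s)) * (-(α * (1 + K * Real.exp (α * s)))))) s := by
    intro s hs
    exact (hh s hs).mul (((hΦ' s).neg).exp)
  have hgderiv_nonpos : ∀ s : ℝ, s ≤ t₀ →
      h' s * Real.exp (-(Φ s)) +
        h s * (Real.exp (-(Φ s)) * (-(α * (1 + K * Real.exp (α * s))))) ≤ 0 := by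
    intro s hs
    have hx : h' s ≤ α * (1 + K * Real.exp (α * s)) * h s := hineq s hs
    have hexp : (0:ℝ) < Real.exp (-(Φ s)) := Real.exp_pos _
    have hm := mul_le_mul_of_nonneg_right hx hexp.le
    nlinarith [hm]
  have hanti : AntitoneOn g (Set.Iic t₀) := by
    apply antitoneOn_of_deriv_nonpos (convex_Iic t₀)
    · intro x hx
      exact ((hgderiv x hx).continuousAt).continuousWithinAt
    · intro x hx
      rw [interior_Iic] at hx
      exact (hgderiv x (le_of_lt hx)).differentiableAt.differentiableWithinAt
    · intro x hx
      rw [interior_Iic] at hx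
      rw [(hgderiv x (le_of_lt hx)).deriv]
      exact hgderiv_nonpos x (le_of_lt hx)
  intro t ht
  -- g (tn n) → 0
  have htn' : Tendsto (fun n => α * tn n) atTop atBot :=
    (tendsto_const_mul_atBot_of_pos hα).mpr htn
  have hexp0 : Tendsto (fun n => Real.exp (α * tn n)) atTop (𝓝 0) :=
    Real.tendsto_exp_atBot.comp htn'
  have hfac : Tendsto (fun n => Real.exp (-(K * Real.exp (α * tn n)))) atTop (𝓝 1) := by
    have : Tendsto (fun n => -(K * Real.exp (α * tn n))) atTop (𝓝 0) := by
      have := (hexp0.const_mul K).neg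
      simpa using this
    have := (Real.continuous_exp.tendsto 0).comp this
    simpa [Function.comp_def] using this
  have hgtend : Tendsto (fun n => g (tn n)) atTop (𝓝 0) := by
    have heq : ∀ n, g (tn n) =
        (h (tn n) / Real.exp (α * tn n)) * Real.exp (-(K * Real.exp (α * tn n))) := by
      intro n
      simp only [hg_def, hΦ_def]
      rw [neg_add, Real.exp_add, Real.exp_neg (α * tn n), div_eq_mul_inv]
      ring
    rw [show (0:ℝ) = 0 * 1 by ring]
    have := hsmall.mul hfac
    simpa [heq] using this
  -- eventually tn n ≤ t, so g t ≤ g (tn n)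
  have hev : ∀ᶠ n in atTop, g t ≤ g (tn n) := by
    filter_upwards [htn.eventually (eventually_le_atBot t)] with n hn
    exact hanti (le_trans hn ht) ht hn
  have hgt : g t ≤ 0 := ge_of_tendsto hgtend hev
  have hgt' : h t * Real.exp (-(Φ t)) ≤ 0 := hgt
  have hexp : (0:ℝ) < Real.exp (-(Φ t)) := Real.exp_pos _
  have hnn : 0 ≤ h t := add_nonneg (abs_nonneg _) (norm_nonneg _)
  have hle : h t ≤ 0 := by
    by_contra hc
    push_neg at hc
    nlinarith [hgt', hc, hexp]
  have hht : |v t| + ‖V t‖ = 0 := le_antisymm hle hnn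
  constructor
  · exact abs_eq_zero.mp (by linarith [abs_nonneg (v t), norm_nonneg (V t)])
  · exact norm_eq_zero.mp (by linarith [abs_nonneg (v t), norm_nonneg (V t)])
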